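/- On the infinite line, for N hard-core particles the configuration graph distance between x = {x_1 < ... < x_N} and y = {y_1 < ... < y_N} (subsets of ℤ of size N) equals Σ_{j=1}^N |x_j − y_j|. -/

import Mathlib

open Finset
open scoped Classical

noncomputable section

/-- Hard-core configuration graph on the infinite line `ℤ`. -/
def lineGraph : SimpleGraph (Finset ℤ) where
  Adj x y := x.card = y.card ∧ ∃ j : ℤ, symmDiff x y = {j, j + 1}
  symm := by
    constructor
    rintro x y ⟨h1, j, h2⟩
    refine ⟨h1.symm, j, ?_⟩
    rw [symmDiff_comm]
    exact h2
  loopless := by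
    constructor
    rintro x ⟨-, j, h2⟩
    have hj : j ∈ symmDiff x x := by rw [h2]; simp
    rw [symmDiff_self] at hj
    simp at hj

/-- Graph distance `d^N` on the line configuration graph. -/
def dZ (x y : Finset ℤ) : ℕ := lineGraph.dist x y

/-- The droplet of `N` consecutive integers centred at `m`. -/
def dropletZ (N : ℕ) (m : ℤ) : Finset ℤ :=
  (Finset.range N).image fun i => m - (((N - 1) / 2 : ℕ) : ℤ) + (i : ℤ)

/-- Distance of a configuration to the set of droplets on the line. -/
def distDropZ (N : ℕ) (x : Finset ℤ) : ℕ :=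
  sInf (Set.range fun m : ℤ => dZ x (dropletZ N m))

/-- Centres of droplets closest to `x` on the line. -/
def WZ (N : ℕ) (x : Finset ℤ) : Set ℤ :=
  {m : ℤ | dZ x (dropletZ N m) = distDropZ N x}

namespace LineAux

/-- The increasing enumeration of an `N`-element configuration. -/
def seq {N : ℕ} (x : Finset ℤ) (hx : x.card = N) : Fin N → ℤ := x.orderEmbOfFin hx

lemma seq_mono {N : ℕ} {x : Finset ℤ} (hx : x.card = N) : StrictMono (seq x hx) :=
  (x.orderEmbOfFin hx).strictMono

lemma seq_mem {N : ℕ} {x : Finset ℤ} (hx : x.card = N) (k : Fin N) : seq x hx k ∈ x :=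
  x.orderEmbOfFin_mem hx k

lemma seq_surj {N : ℕ} {x : Finset ℤ} (hx : x.card = N) {b : ℤ} (hb : b ∈ x) :
    ∃ k, seq x hx k = b := by
  have : b ∈ Set.range (x.orderEmbOfFin hx) := by
    rw [x.range_orderEmbOfFin hx]; exact hb
  exact this

lemma half {x z : Finset ℤ} (hc : x.card = z.card) {a : ℤ}
    (hs : symmDiff x z = {a, a + 1}) (hax : a ∈ x) (haz : a ∉ z) :
    a + 1 ∉ x ∧ a + 1 ∈ z ∧ z = insert (a + 1) (x.erase a) := by
  have h1 : a + 1 ∈ symmDiff x z := by rw [hs]; simp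
  rcases Finset.mem_symmDiff.1 h1 with ⟨h1x, h1z⟩ | ⟨h1z, h1x⟩
  · exfalso
    have hzx : z ⊆ x := by
      intro b hb
      by_contra hbx
      have hbs : b ∈ symmDiff x z := Finset.mem_symmDiff.2 (Or.inr ⟨hb, hbx⟩)
      rw [hs] at hbs
      rcases Finset.mem_insert.1 hbs with rfl | hb2
      · exact haz hb
      · rw [Finset.mem_singleton] at hb2; subst hb2; exact h1z hb
    have hzeq := Finset.eq_of_subset_of_card_le hzx hc.le
    exact haz (hzeq ▸ hax)
  · refine ⟨h1x, h1z, ?_⟩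
    ext b
    simp only [Finset.mem_insert, Finset.mem_erase]
    constructor
    · intro hb
      by_cases hbx : b ∈ x
      · exact Or.inr ⟨fun h => haz (h ▸ hb), hbx⟩
      · have hbs : b ∈ symmDiff x z := Finset.mem_symmDiff.2 (Or.inr ⟨hb, hbx⟩)
        rw [hs] at hbs
        rcases Finset.mem_insert.1 hbs with rfl | hb2
        · exact absurd hb haz
        · rw [Finset.mem_singleton] at hb2; exact Or.inl hb2
    · rintro (rfl | ⟨hba, hbx⟩)
      · exact h1z
      · by_contra hbz
        have hbs : b ∈ symmDiff x z := Finset.mem_symmDiff.2 (Or.inl ⟨hbx, hbz⟩)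
        rw [hs] at hbs
        rcases Finset.mem_insert.1 hbs with rfl | hb2
        · exact hba rfl
        · rw [Finset.mem_singleton] at hb2; subst hb2; exact h1x hbx

lemma adj_cases {x z : Finset ℤ} (h : lineGraph.Adj x z) :
    ∃ a : ℤ, (a ∈ x ∧ a + 1 ∉ x ∧ z = insert (a + 1) (x.erase a)) ∨
             (a ∈ z ∧ a + 1 ∉ z ∧ x = insert (a + 1) (z.erase a)) := by
  obtain ⟨hc, a, hs⟩ := h
  have ha : a ∈ symmDiff x z := by rw [hs]; simp
  rcases Finset.mem_symmDiff.1 ha with ⟨hax, haz⟩ | ⟨haz, hax⟩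
  · obtain ⟨h1, h2, h3⟩ := half hc hs hax haz
    exact ⟨a, Or.inl ⟨hax, h1, h3⟩⟩
  · obtain ⟨h1, h2, h3⟩ := half hc.symm (by rwa [symmDiff_comm]) haz hax
    exact ⟨a, Or.inr ⟨haz, h1, h3⟩⟩


lemma moveSorted {N : ℕ} {x : Finset ℤ} (hx : x.card = N) (j : Fin N)
    (h1 : seq x hx j + 1 ∉ x) :
    ∃ hx' : (insert (seq x hx j + 1) (x.erase (seq x hx j))).card = N,
      lineGraph.Adj x (insert (seq x hx j + 1) (x.erase (seq x hx j))) ∧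
      ∀ k : Fin N, seq (insert (seq x hx j + 1) (x.erase (seq x hx j))) hx' k =
        if k = j then seq x hx j + 1 else seq x hx k := by
  have hmem : seq x hx j ∈ x := seq_mem hx j
  have hcard : (insert (seq x hx j + 1) (x.erase (seq x hx j))).card = N := by
    rw [Finset.card_insert_of_notMem (fun h => h1 (Finset.mem_erase.1 h).2),
        Finset.card_erase_of_mem hmem, hx]
    have := j.2
    omega
  refine ⟨hcard, ?_, ?_⟩
  · refine ⟨hx.trans hcard.symm, seq x hx j, ?_⟩
    ext b
    rw [Finset.mem_symmDiff]
    simp only [Finset.mem_insert, Finset.mem_erase, Finset.mem_singleton]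
    by_cases hba : b = seq x hx j <;> by_cases hba1 : b = seq x hx j + 1
    · omega
    · subst hba; simp [hmem, h1]
    · subst hba1; simp [h1]
    · simp [hba, hba1]
  · have hmono : StrictMono (fun k => if k = j then seq x hx j + 1 else seq x hx k) := by
      intro k l hkl
      dsimp only
      rcases eq_or_ne k j with rfl | hk
      · rw [if_pos rfl, if_neg (ne_of_gt hkl)]
        have h2 : seq x hx k < seq x hx l := seq_mono hx hkl
        have h3 : seq x hx l ≠ seq x hx k + 1 := fun h => h1 (h ▸ seq_mem hx l)
        omega
      · rcases eq_or_ne l j with rfl | hl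
        · rw [if_neg hk, if_pos rfl]
          have h2 : seq x hx k < seq x hx l := seq_mono hx hkl
          omega
        · rw [if_neg hk, if_neg hl]
          exact seq_mono hx hkl
    have hf : ∀ k, (if k = j then seq x hx j + 1 else seq x hx k)
        ∈ insert (seq x hx j + 1) (x.erase (seq x hx j)) := by
      intro k
      rcases eq_or_ne k j with rfl | hk
      · simp
      · rw [if_neg hk]
        exact Finset.mem_insert_of_mem (Finset.mem_erase.2
          ⟨fun h => hk ((seq_mono hx).injective h), seq_mem hx k⟩)
    have huniq := Finset.orderEmbOfFin_unique hcard hf hmono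
    intro k
    exact (congrFun huniq k).symm


lemma sum_split_eq {N : ℕ} (j : Fin N) (f g : Fin N → ℕ)
    (hoff : ∀ k, k ≠ j → f k = g k) (hj : f j + 1 = g j) :
    (∑ k : Fin N, f k) + 1 = ∑ k : Fin N, g k := by
  have he : ∑ k ∈ Finset.univ.erase j, f k = ∑ k ∈ Finset.univ.erase j, g k :=
    Finset.sum_congr rfl (fun k hk => hoff k (Finset.mem_erase.1 hk).1)
  rw [← Finset.sum_erase_add _ f (Finset.mem_univ j),
      ← Finset.sum_erase_add _ g (Finset.mem_univ j), he]
  omega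

lemma sum_split_le {N : ℕ} (j : Fin N) (f g : Fin N → ℕ)
    (hoff : ∀ k, k ≠ j → f k = g k) (hj : f j ≤ g j + 1) :
    ∑ k : Fin N, f k ≤ (∑ k : Fin N, g k) + 1 := by
  have he : ∑ k ∈ Finset.univ.erase j, f k = ∑ k ∈ Finset.univ.erase j, g k :=
    Finset.sum_congr rfl (fun k hk => hoff k (Finset.mem_erase.1 hk).1)
  rw [← Finset.sum_erase_add _ f (Finset.mem_univ j),
      ← Finset.sum_erase_add _ g (Finset.mem_univ j), he]
  omega

lemma moveStep {N : ℕ} {x y : Finset ℤ} (hx : x.card = N) (hy : y.card = N)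
    (h : ∃ j : Fin N, seq x hx j < seq y hy j) :
    ∃ (x' : Finset ℤ) (hx' : x'.card = N), lineGraph.Adj x x' ∧
      (∑ k : Fin N, (seq x' hx' k - seq y hy k).natAbs) + 1
        = ∑ k : Fin N, (seq x hx k - seq y hy k).natAbs := by
  classical
  obtain ⟨j0, hj0⟩ := h
  set S := Finset.univ.filter (fun k : Fin N => seq x hx k < seq y hy k) with hS
  have hSne : S.Nonempty := ⟨j0, by simp [hS, hj0]⟩
  set j := S.max' hSne with hjdef
  have hj : seq x hx j < seq y hy j := (Finset.mem_filter.1 (S.max'_mem hSne)).2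
  have hmax : ∀ k, seq x hx k < seq y hy k → k ≤ j := fun k hk =>
    S.le_max' k (by simp [hS, hk])
  have h1 : seq x hx j + 1 ∉ x := by
    intro hmem
    obtain ⟨k, hk⟩ := seq_surj hx hmem
    have hjk : j < k := (seq_mono hx).lt_iff_lt.1 (by omega)
    have h2 : seq x hx k < seq y hy k := by
      have h3 : seq y hy j < seq y hy k := seq_mono hy hjk
      omega
    exact absurd (hmax k h2) (not_le.2 hjk)
  obtain ⟨hx', hadj, hsk⟩ := moveSorted hx j h1
  refine ⟨_, hx', hadj, ?_⟩
  refine sum_split_eq j _ _ (fun k hk => by rw [hsk k, if_neg hk]) ?_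
  rw [hsk j, if_pos rfl]
  omega


lemma lipschitz {N : ℕ} {x z y : Finset ℤ} (hadj : lineGraph.Adj x z)
    (hx : x.card = N) (hz : z.card = N) (hy : y.card = N) :
    ∑ k : Fin N, (seq x hx k - seq y hy k).natAbs ≤
      (∑ k : Fin N, (seq z hz k - seq y hy k).natAbs) + 1 := by
  obtain ⟨a, ⟨hax, ha1, hzeq⟩ | ⟨haz, ha1, hxeq⟩⟩ := adj_cases hadj
  · obtain ⟨j, hj⟩ := seq_surj hx hax
    rw [← hj] at hzeq ha1
    obtain ⟨hx'', _, hsk⟩ := moveSorted hx j ha1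
    subst hzeq
    have hsk' : ∀ k, seq _ hz k = if k = j then seq x hx j + 1 else seq x hx k := fun k => hsk k
    refine sum_split_le j _ _ (fun k hk => by rw [hsk' k, if_neg hk]) ?_
    rw [hsk' j, if_pos rfl]
    omega
  · obtain ⟨j, hj⟩ := seq_surj hz haz
    rw [← hj] at hxeq ha1
    obtain ⟨hx'', _, hsk⟩ := moveSorted hz j ha1
    subst hxeq
    have hsk' : ∀ k, seq _ hx k = if k = j then seq z hz j + 1 else seq z hz k := fun k => hsk k
    refine sum_split_le j _ _ (fun k hk => by rw [hsk' k, if_neg hk]) ?_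
    rw [hsk' j, if_pos rfl]
    omega

lemma lower {N : ℕ} : ∀ (x y : Finset ℤ) (w : lineGraph.Walk x y)
    (hx : x.card = N) (hy : y.card = N),
    ∑ k : Fin N, (seq x hx k - seq y hy k).natAbs ≤ w.length := by
  intro x y w
  induction w with
  | nil =>
    intro hx hy
    have : ∀ k : Fin N, (seq _ hx k - seq _ hy k).natAbs = 0 := by
      intro k
      have : seq _ hx k = seq _ hy k := rfl
      omega
    simp [Finset.sum_congr rfl (fun k _ => this k)]
  | @cons u v w' h p ih =>
    intro hx hy
    have hv : v.card = N := h.1.symm.trans hx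
    calc ∑ k : Fin N, (seq u hx k - seq w' hy k).natAbs
        ≤ (∑ k : Fin N, (seq v hv k - seq w' hy k).natAbs) + 1 := lipschitz h hx hv hy
      _ ≤ p.length + 1 := Nat.add_le_add_right (ih hv hy) 1
      _ = (SimpleGraph.Walk.cons h p).length := by
          rw [SimpleGraph.Walk.length_cons]


lemma flip_sum {N : ℕ} {a b : Finset ℤ} (ha : a.card = N) (hb : b.card = N) :
    ∑ k : Fin N, (seq a ha k - seq b hb k).natAbs
      = ∑ k : Fin N, (seq b hb k - seq a ha k).natAbs :=
  Finset.sum_congr rfl (fun k _ => by omega)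

lemma upper {N : ℕ} : ∀ (n : ℕ) (x y : Finset ℤ) (hx : x.card = N) (hy : y.card = N),
    (∑ k : Fin N, (seq x hx k - seq y hy k).natAbs) = n →
    ∃ w : lineGraph.Walk x y, w.length ≤ n := by
  intro n
  induction n with
  | zero =>
    intro x y hx hy h
    have hk : ∀ k : Fin N, seq x hx k = seq y hy k := by
      intro k
      have := (Finset.sum_eq_zero_iff.1 h) k (Finset.mem_univ k)
      omega
    have hxy : x = y := by
      ext b
      constructor
      · intro hb
        obtain ⟨k, hkk⟩ := seq_surj hx hb
        rw [← hkk, hk k]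
        exact seq_mem hy k
      · intro hb
        obtain ⟨k, hkk⟩ := seq_surj hy hb
        rw [← hkk, ← hk k]
        exact seq_mem hx k
    subst hxy
    exact ⟨SimpleGraph.Walk.nil, le_rfl⟩
  | succ n ih =>
    intro x y hx hy h
    by_cases hcase : ∃ j : Fin N, seq x hx j < seq y hy j
    · obtain ⟨x', hx', hadj, hsum⟩ := moveStep hx hy hcase
      obtain ⟨w, hw⟩ := ih x' y hx' hy (by omega)
      exact ⟨SimpleGraph.Walk.cons hadj w,
        by rw [SimpleGraph.Walk.length_cons]; omega⟩
    · have hcase2 : ∃ j : Fin N, seq y hy j < seq x hx j := by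
        by_contra hc
        push_neg at hc hcase
        have heq : ∀ j : Fin N, seq x hx j = seq y hy j :=
          fun j => le_antisymm (hc j) (hcase j)
        have hzero : (∑ k : Fin N, (seq x hx k - seq y hy k).natAbs) = 0 :=
          Finset.sum_eq_zero (fun k _ => by rw [heq k]; simp)
        omega
      obtain ⟨y', hy', hadj, hsum⟩ := moveStep hy hx hcase2
      have hflip := flip_sum hx hy
      have hflip2 := flip_sum hx hy'
      obtain ⟨w, hw⟩ := ih x y' hx hy' (by omega)
      exact ⟨w.concat hadj.symm, by rw [SimpleGraph.Walk.length_concat]; omega⟩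

end LineAux

/-- On the infinite line, the hard-core configuration graph distance between two `N`-element
configurations is the sum of the distances of corresponding particles in increasing order. -/

theorem line_dist_eq_sum (N : ℕ) (x y : Finset ℤ) (hx : x.card = N) (hy : y.card = N) :
    dZ x y = ∑ j : Fin N, (x.orderEmbOfFin hx j - y.orderEmbOfFin hy j).natAbs := by
  show lineGraph.dist x y = ∑ j : Fin N, (LineAux.seq x hx j - LineAux.seq y hy j).natAbs
  obtain ⟨w, hw⟩ := LineAux.upper _ x y hx hy rfl
  apply le_antisymm
  · exact (SimpleGraph.dist_le w).trans hw
  · have hr : lineGraph.Reachable x y := ⟨w⟩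
    obtain ⟨p, hp⟩ := hr.exists_walk_length_eq_dist
    calc ∑ j : Fin N, (LineAux.seq x hx j - LineAux.seq y hy j).natAbs
        ≤ p.length := LineAux.lower x y p hx hy
      _ = lineGraph.dist x y := hp
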